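/- arXiv:1605.00253 — 3 statements merged into one kernel-verified Lean document; each statement's English description precedes it below -/
import Mathlib

section
/- Let n ≥ 1. If G is a finite simple graph in which every vertex has degree 3 or degree 6, with exactly 6n² + 6n vertices of degree 3 and exactly 9n² − 3n vertices of degree 6 (as in the silicate network SL_n), then the second multiplicative Zagreb index satisfies Π₂(G) = 2^{54n² − 18n} · 3^{72n²}. -/
open Finset

variable {V : Type*}

/-- The first multiplicative Zagreb index with real parameter `c`:
`Π_{1,c}(G) = ∏_{v ∈ V(G)} d(v)^c`, real powers taken in `ℝ`. -/
noncomputable def mulZagreb1 [Fintype V] (G : SimpleGraph V) [DecidableRel G.Adj] (c : ℝ) : ℝ :=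
  ∏ v : V, (G.degree v : ℝ) ^ c

/-- The second multiplicative Zagreb index: `Π₂(G) = ∏_{uv ∈ E(G)} d(u)·d(v)`. -/
def mulZagreb2 [Fintype V] (G : SimpleGraph V) [DecidableRel G.Adj] : ℕ :=
  ∏ e ∈ G.edgeFinset,
    Sym2.lift ⟨fun u v => G.degree u * G.degree v, fun _ _ => mul_comm _ _⟩ e

/-- The general sum-connectivity index with real parameter `α`:
`χ_α(G) = Σ_{uv ∈ E(G)} (d(u) + d(v))^α`, real powers. -/
noncomputable def sumConn [Fintype V] (G : SimpleGraph V) [DecidableRel G.Adj] (α : ℝ) : ℝ :=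
  ∑ e ∈ G.edgeFinset,
    Sym2.lift ⟨fun u v => ((G.degree u : ℝ) + (G.degree v : ℝ)) ^ α,
      fun u v => by dsimp only; rw [add_comm ((G.degree u : ℝ))]⟩ e

/-- The multiplicative version of the ordinary first Zagreb index:
`Π₁*(G) = ∏_{uv ∈ E(G)} (d(u) + d(v))`. -/
def mulZagrebStar [Fintype V] (G : SimpleGraph V) [DecidableRel G.Adj] : ℕ :=
  ∏ e ∈ G.edgeFinset,
    Sym2.lift ⟨fun u v => G.degree u + G.degree v, fun _ _ => add_comm _ _⟩ e

/-- The set of edges of `G` whose two endpoints have degrees `i` and `j`. -/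
def edgesOfType [Fintype V] (G : SimpleGraph V) [DecidableRel G.Adj] (i j : ℕ) : Set (Sym2 V) :=
  {e | e ∈ G.edgeSet ∧ ∃ u v, e = s(u, v) ∧ G.degree u = i ∧ G.degree v = j}

section Aux

open SimpleGraph

variable [Fintype V] (G : SimpleGraph V) [DecidableRel G.Adj]

lemma prod_darts_eq_mulZagreb2 :
    ∏ d : G.Dart, G.degree d.fst = mulZagreb2 G := by
  classical
  rw [mulZagreb2, ← Finset.prod_fiberwise_of_maps_to
    (g := SimpleGraph.Dart.edge) (t := G.edgeFinset)
    (fun d _ => by rw [mem_edgeFinset]; exact d.edge_mem)]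
  refine Finset.prod_congr rfl fun e he => ?_
  rw [mem_edgeFinset] at he
  induction' e with u v
  let d : G.Dart := ⟨(u, v), he⟩
  have hfib : (Finset.univ.filter fun d' : G.Dart => d'.edge = s(u, v)) = {d, d.symm} := by
    exact d.edge_fiber
  rw [hfib, Finset.prod_insert (by simpa [Finset.mem_singleton] using d.symm_ne.symm),
    Finset.prod_singleton]
  simp [d, SimpleGraph.Dart.symm]
  exact Or.inl (by congr 1)

lemma prod_darts_eq_prod_degpow :
    ∏ d : G.Dart, G.degree d.fst = ∏ v : V, G.degree v ^ G.degree v := by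
  classical
  rw [← Finset.prod_fiberwise_of_maps_to
    (g := fun d : G.Dart => d.fst) (t := (Finset.univ : Finset V)) (fun _ _ => Finset.mem_univ _)]
  refine Finset.prod_congr rfl fun v _ => ?_
  rw [Finset.prod_congr rfl (fun d hd => by
      rw [(Finset.mem_filter.1 hd).2]), Finset.prod_const]
  congr 1
  exact G.dart_fst_fiber_card_eq_degree v

end Aux

theorem silicate_mulZagreb2 (n : ℕ) (hn : 1 ≤ n)
    [Fintype V] (G : SimpleGraph V) [DecidableRel G.Adj]
    (hdeg : ∀ v : V, G.degree v = 3 ∨ G.degree v = 6)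
    (h3 : (Finset.univ.filter fun v : V => G.degree v = 3).card = 6 * n ^ 2 + 6 * n)
    (h6 : (Finset.univ.filter fun v : V => G.degree v = 6).card = 9 * n ^ 2 - 3 * n) :
    mulZagreb2 G = 2 ^ (54 * n ^ 2 - 18 * n) * 3 ^ (72 * n ^ 2) := by
  classical
  have key : mulZagreb2 G = ∏ v : V, G.degree v ^ G.degree v := by
    rw [← prod_darts_eq_mulZagreb2, prod_darts_eq_prod_degpow]
  have hsplit : (∏ v : V, G.degree v ^ G.degree v) =
      (∏ v ∈ Finset.univ.filter fun v : V => G.degree v = 3, G.degree v ^ G.degree v) *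
      (∏ v ∈ Finset.univ.filter fun v : V => ¬ G.degree v = 3, G.degree v ^ G.degree v) :=
    (Finset.prod_filter_mul_prod_filter_not _ _ _).symm
  have hfilter : (Finset.univ.filter fun v : V => ¬ G.degree v = 3) =
      (Finset.univ.filter fun v : V => G.degree v = 6) := by
    refine Finset.filter_congr fun v _ => ?_
    rcases hdeg v with h | h <;> simp [h]
  have h1 : (∏ v ∈ Finset.univ.filter fun v : V => G.degree v = 3,
      G.degree v ^ G.degree v) = 27 ^ (6 * n ^ 2 + 6 * n) := by
    rw [Finset.prod_congr rfl (fun v hv => by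
      rw [(Finset.mem_filter.1 hv).2]), Finset.prod_const, h3]
    norm_num
  have h2 : (∏ v ∈ Finset.univ.filter fun v : V => G.degree v = 6,
      G.degree v ^ G.degree v) = 46656 ^ (9 * n ^ 2 - 3 * n) := by
    rw [Finset.prod_congr rfl (fun v hv => by
      rw [(Finset.mem_filter.1 hv).2]), Finset.prod_const, h6]
    norm_num
  rw [key, hsplit, hfilter, h1, h2]
  have hm : 3 * n <= 9 * n ^ 2 := by nlinarith
  have eB : 6 * (9 * n ^ 2 - 3 * n) = 54 * n ^ 2 - 18 * n := by omega
  have eA : 3 * (6 * n ^ 2 + 6 * n) + 6 * (9 * n ^ 2 - 3 * n) = 72 * n ^ 2 := by omega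
  calc 27 ^ (6 * n ^ 2 + 6 * n) * 46656 ^ (9 * n ^ 2 - 3 * n)
      = 2 ^ (6 * (9 * n ^ 2 - 3 * n)) *
        3 ^ (3 * (6 * n ^ 2 + 6 * n) + 6 * (9 * n ^ 2 - 3 * n)) := by
        rw [show (27 : ℕ) = 3 ^ 3 by norm_num, show (46656 : ℕ) = 2 ^ 6 * 3 ^ 6 by norm_num,
          mul_pow, ← pow_mul, ← pow_mul, ← pow_mul, pow_add]
        ring
    _ = 2 ^ (54 * n ^ 2 - 18 * n) * 3 ^ (72 * n ^ 2) := by rw [eA, eB]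
end

section
/- Let n ≥ 1 and let α be a real number. If G is a finite simple graph whose edge set consists of exactly 6n edges whose two endpoints both have degree 3, exactly 18n² + 6n edges with one endpoint of degree 3 and the other of degree 6, and exactly 18n² − 12n edges whose two endpoints both have degree 6 (as in the silicate network SL_n), then the general sum-connectivity index satisfies χ_α(G) = n·6^{α+1} + 3^{2α+1}(6n² + 2n) + 2^{2α+1}·3^{α+1}(3n² − 2n). -/
open Finset

variable {V : Type*}

theorem silicate_sumConn (n : ℕ) (hn : 1 ≤ n) (α : ℝ)
    [Fintype V] (G : SimpleGraph V) [DecidableRel G.Adj]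
    (hcover : ∀ u v : V, G.Adj u v →
      s(G.degree u, G.degree v) ∈ ({s(3, 3), s(3, 6), s(6, 6)} : Set (Sym2 ℕ)))
    (h33 : (edgesOfType G 3 3).ncard = 6 * n)
    (h36 : (edgesOfType G 3 6).ncard = 18 * n ^ 2 + 6 * n)
    (h66 : (edgesOfType G 6 6).ncard = 18 * n ^ 2 - 12 * n) :
    sumConn G α =
      (n : ℝ) * (6 : ℝ) ^ (α + 1) + (3 : ℝ) ^ (2 * α + 1) * (6 * (n : ℝ) ^ 2 + 2 * (n : ℝ)) +
        (2 : ℝ) ^ (2 * α + 1) * (3 : ℝ) ^ (α + 1) * (3 * (n : ℝ) ^ 2 - 2 * (n : ℝ)) := by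
  classical
  set g : Sym2 V → ℕ :=
    Sym2.lift ⟨fun u v => G.degree u + G.degree v, fun _ _ => add_comm _ _⟩ with hg
  have hglift : ∀ u v : V, g s(u, v) = G.degree u + G.degree v := fun u v => rfl
  -- characterize the three edge types via the degree-sum
  have hcov : ∀ u v : V, G.Adj u v →
      (G.degree u = 3 ∧ G.degree v = 3) ∨
      (G.degree u = 3 ∧ G.degree v = 6) ∨ (G.degree u = 6 ∧ G.degree v = 3) ∨
      (G.degree u = 6 ∧ G.degree v = 6) := by
    intro u v hadj
    have := hcover u v hadj
    simp only [Set.mem_insert_iff, Set.mem_singleton_iff, Sym2.eq_iff] at this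
    omega
  have e33 : edgesOfType G 3 3 = ↑(G.edgeFinset.filter fun e => g e = 6) := by
    ext e
    induction e using Sym2.ind with
    | _ u v =>
      simp only [edgesOfType, Set.mem_setOf_eq, Finset.coe_filter, Set.mem_setOf_eq,
        SimpleGraph.mem_edgeFinset]
      constructor
      · rintro ⟨hmem, u', v', heq, h3, h4⟩
        refine ⟨hmem, ?_⟩
        rw [heq, hglift, h3, h4]
      · rintro ⟨hmem, hsum⟩
        rw [hglift] at hsum
        rcases hcov u v ((SimpleGraph.mem_edgeSet G).mp hmem) with h | h | h | h
        · exact ⟨hmem, u, v, rfl, h.1, h.2⟩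
        all_goals omega
  have e36 : edgesOfType G 3 6 = ↑(G.edgeFinset.filter fun e => g e = 9) := by
    ext e
    induction e using Sym2.ind with
    | _ u v =>
      simp only [edgesOfType, Set.mem_setOf_eq, Finset.coe_filter, Set.mem_setOf_eq,
        SimpleGraph.mem_edgeFinset]
      constructor
      · rintro ⟨hmem, u', v', heq, h3, h4⟩
        refine ⟨hmem, ?_⟩
        rw [heq, hglift, h3, h4]
      · rintro ⟨hmem, hsum⟩
        rw [hglift] at hsum
        rcases hcov u v ((SimpleGraph.mem_edgeSet G).mp hmem) with h | h | h | h
        · omega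
        · exact ⟨hmem, u, v, rfl, h.1, h.2⟩
        · exact ⟨hmem, v, u, Sym2.eq_swap, h.2, h.1⟩
        · omega
  have e66 : edgesOfType G 6 6 = ↑(G.edgeFinset.filter fun e => g e = 12) := by
    ext e
    induction e using Sym2.ind with
    | _ u v =>
      simp only [edgesOfType, Set.mem_setOf_eq, Finset.coe_filter, Set.mem_setOf_eq,
        SimpleGraph.mem_edgeFinset]
      constructor
      · rintro ⟨hmem, u', v', heq, h3, h4⟩
        refine ⟨hmem, ?_⟩
        rw [heq, hglift, h3, h4]
      · rintro ⟨hmem, hsum⟩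
        rw [hglift] at hsum
        rcases hcov u v ((SimpleGraph.mem_edgeSet G).mp hmem) with h | h | h | h
        · omega
        · omega
        · omega
        · exact ⟨hmem, u, v, rfl, h.1, h.2⟩
  have c33 : (G.edgeFinset.filter fun e => g e = 6).card = 6 * n := by
    rw [← Set.ncard_coe_finset, ← e33, h33]
  have c36 : (G.edgeFinset.filter fun e => g e = 9).card = 18 * n ^ 2 + 6 * n := by
    rw [← Set.ncard_coe_finset, ← e36, h36]
  have c66 : (G.edgeFinset.filter fun e => g e = 12).card = 18 * n ^ 2 - 12 * n := by
    rw [← Set.ncard_coe_finset, ← e66, h66]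
  -- every edge has degree-sum 6, 9 or 12
  have hval : ∀ e ∈ G.edgeFinset, g e = 6 ∨ g e = 9 ∨ g e = 12 := by
    intro e he
    induction e using Sym2.ind with
    | _ u v =>
      rw [SimpleGraph.mem_edgeFinset] at he
      rcases hcov u v ((SimpleGraph.mem_edgeSet G).mp he) with h | h | h | h <;>
        rw [hglift] <;> omega
  have hunion : G.edgeFinset =
      ((G.edgeFinset.filter fun e => g e = 6) ∪ (G.edgeFinset.filter fun e => g e = 9)) ∪
        (G.edgeFinset.filter fun e => g e = 12) := by
    ext e
    simp only [Finset.mem_union, Finset.mem_filter]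
    constructor
    · intro he
      rcases hval e he with h | h | h
      · exact Or.inl (Or.inl ⟨he, h⟩)
      · exact Or.inl (Or.inr ⟨he, h⟩)
      · exact Or.inr ⟨he, h⟩
    · rintro ((⟨he, _⟩ | ⟨he, _⟩) | ⟨he, _⟩) <;> exact he
  have hd1 : Disjoint (G.edgeFinset.filter fun e => g e = 6)
      (G.edgeFinset.filter fun e => g e = 9) := by
    rw [Finset.disjoint_left]
    intro e h6 h9
    simp only [Finset.mem_filter] at h6 h9
    omega
  have hd2 : Disjoint ((G.edgeFinset.filter fun e => g e = 6) ∪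
      (G.edgeFinset.filter fun e => g e = 9)) (G.edgeFinset.filter fun e => g e = 12) := by
    rw [Finset.disjoint_left]
    intro e h69 h12
    simp only [Finset.mem_union, Finset.mem_filter] at h69 h12
    omega
  have hsum_eq : sumConn G α = ∑ e ∈ G.edgeFinset, ((g e : ℝ)) ^ α := by
    unfold sumConn
    refine Finset.sum_congr rfl fun e _ => ?_
    induction e using Sym2.ind with
    | _ u v =>
      rw [Sym2.lift_mk, hglift]
      push_cast
      ring_nf
  have hconst : ∀ k : ℕ, ∑ e ∈ (G.edgeFinset.filter fun e => g e = k), ((g e : ℝ)) ^ α =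
      ((G.edgeFinset.filter fun e => g e = k).card : ℝ) * ((k : ℝ)) ^ α := by
    intro k
    rw [Finset.sum_congr rfl fun e he => by
      rw [(Finset.mem_filter.mp he).2], Finset.sum_const, nsmul_eq_mul]
  have hcast66 : ((18 * n ^ 2 - 12 * n : ℕ) : ℝ) = 18 * (n : ℝ) ^ 2 - 12 * (n : ℝ) := by
    have hle : 12 * n ≤ 18 * n ^ 2 := by nlinarith
    push_cast [Nat.cast_sub hle]
    ring
  rw [hsum_eq, hunion, Finset.sum_union hd2, Finset.sum_union hd1, hconst, hconst, hconst,
    c33, c36, c66, hcast66]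
  have h6 : (6 : ℝ) ^ α = (2 : ℝ) ^ α * (3 : ℝ) ^ α := by
    rw [← Real.mul_rpow (by norm_num) (by norm_num)]; norm_num
  have h9 : (9 : ℝ) ^ α = (3 : ℝ) ^ α * (3 : ℝ) ^ α := by
    rw [← Real.mul_rpow (by norm_num) (by norm_num)]; norm_num
  have h12 : (12 : ℝ) ^ α = (2 : ℝ) ^ α * (2 : ℝ) ^ α * (3 : ℝ) ^ α := by
    rw [← Real.mul_rpow (by positivity) (by norm_num),
      ← Real.mul_rpow (by norm_num) (by norm_num)]
    norm_num
  have h6' : (6 : ℝ) ^ (α + 1) = (2 : ℝ) ^ α * (3 : ℝ) ^ α * 6 := by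
    rw [Real.rpow_add_one (by norm_num), h6]
  have h3' : (3 : ℝ) ^ (2 * α + 1) = (3 : ℝ) ^ α * (3 : ℝ) ^ α * 3 := by
    rw [Real.rpow_add_one (by norm_num), two_mul, Real.rpow_add (by norm_num)]
  have h2' : (2 : ℝ) ^ (2 * α + 1) = (2 : ℝ) ^ α * (2 : ℝ) ^ α * 2 := by
    rw [Real.rpow_add_one (by norm_num), two_mul, Real.rpow_add (by norm_num)]
  have h3'' : (3 : ℝ) ^ (α + 1) = (3 : ℝ) ^ α * 3 := by
    rw [Real.rpow_add_one (by norm_num)]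
  push_cast
  rw [h6, h9, h12, h6', h3', h2', h3'']
  ring
end

section
/- Let n ≥ 1. If G is a finite simple graph in which every vertex has degree 3 or degree 6, with exactly 2n + 2 vertices of degree 3 and exactly n − 1 vertices of degree 6 (as in the chain silicate network CS_n), then the second multiplicative Zagreb index satisfies Π₂(G) = 2^{6n − 6} · 3^{12n}. -/
open Finset

variable {V : Type*}

lemma prod_dart_fst_eq_prod_deg [Fintype V] (G : SimpleGraph V) [DecidableRel G.Adj]
    (f : V → ℕ) : ∏ d : G.Dart, f d.fst = ∏ v : V, f v ^ G.degree v := by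
  classical
  rw [← Finset.prod_fiberwise_of_maps_to (g := fun d : G.Dart => d.fst)
    (fun d _ => Finset.mem_univ d.fst) (fun d => f d.fst)]
  refine Finset.prod_congr rfl fun v _ => ?_
  rw [Finset.prod_congr rfl (fun d hd => ?_), Finset.prod_const,
    G.dart_fst_fiber_card_eq_degree v]
  rw [Finset.mem_filter] at hd
  rw [hd.2]

lemma prod_dart_fst_eq_prod_edges [Fintype V] (G : SimpleGraph V) [DecidableRel G.Adj]
    (f : V → ℕ) :
    ∏ d : G.Dart, f d.fst =
      ∏ e ∈ G.edgeFinset,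
        Sym2.lift ⟨fun u v => f u * f v, fun _ _ => mul_comm _ _⟩ e := by
  classical
  rw [← Finset.prod_fiberwise_of_maps_to (g := fun d : G.Dart => d.edge)
    (fun d _ => SimpleGraph.mem_edgeFinset.mpr d.edge_mem) (fun d => f d.fst)]
  refine Finset.prod_congr rfl fun e he => ?_
  induction e using Sym2.ind with
  | _ u v =>
    have hadj : G.Adj u v := SimpleGraph.mem_edgeFinset.mp he
    set d₀ : G.Dart := ⟨(u, v), hadj⟩ with hd₀
    have hfib : (Finset.univ.filter fun d : G.Dart => d.edge = s(u, v)) = {d₀, d₀.symm} :=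
      d₀.edge_fiber
    rw [hfib, Finset.prod_pair d₀.symm_ne.symm, Sym2.lift_mk]
    rfl

lemma mulZagreb2_eq_prod_deg [Fintype V] (G : SimpleGraph V) [DecidableRel G.Adj] :
    mulZagreb2 G = ∏ v : V, G.degree v ^ G.degree v := by
  rw [mulZagreb2, ← prod_dart_fst_eq_prod_edges G (fun v => G.degree v),
    prod_dart_fst_eq_prod_deg G (fun v => G.degree v)]

theorem chainSilicate_mulZagreb2 (n : ℕ) (hn : 1 ≤ n)
    [Fintype V] (G : SimpleGraph V) [DecidableRel G.Adj]
    (hdeg : ∀ v : V, G.degree v = 3 ∨ G.degree v = 6)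
    (h3 : (Finset.univ.filter fun v : V => G.degree v = 3).card = 2 * n + 2)
    (h6 : (Finset.univ.filter fun v : V => G.degree v = 6).card = n - 1) :
    mulZagreb2 G = 2 ^ (6 * n - 6) * 3 ^ (12 * n) := by
  classical
  rw [mulZagreb2_eq_prod_deg]
  have hunion : (Finset.univ : Finset V) =
      (Finset.univ.filter fun v : V => G.degree v = 3) ∪
      (Finset.univ.filter fun v : V => G.degree v = 6) := by
    ext v
    simp only [Finset.mem_union, Finset.mem_filter, Finset.mem_univ, true_and, true_iff]
    exact hdeg v
  have hdisj : Disjoint (Finset.univ.filter fun v : V => G.degree v = 3)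
      (Finset.univ.filter fun v : V => G.degree v = 6) := by
    rw [Finset.disjoint_left]
    intro v h1 h2
    simp only [Finset.mem_filter] at h1 h2
    omega
  rw [hunion, Finset.prod_union hdisj]
  rw [Finset.prod_eq_pow_card (b := 3 ^ 3) (fun v hv => by
      rw [Finset.mem_filter] at hv; rw [hv.2]),
    Finset.prod_eq_pow_card (b := 6 ^ 6) (fun v hv => by
      rw [Finset.mem_filter] at hv; rw [hv.2]), h3, h6]
  have h6n : (6 : ℕ) ^ 6 = 2 ^ 6 * 3 ^ 6 := by norm_num
  rw [h6n, mul_pow, ← pow_mul, ← pow_mul, ← pow_mul]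
  have e1 : 6 * (n - 1) = 6 * n - 6 := by omega
  rw [e1, mul_comm ((2:ℕ) ^ (6 * n - 6)) ((3:ℕ) ^ (6 * n - 6)), ← mul_assoc, ← pow_add,
    show 3 * (2 * n + 2) + (6 * n - 6) = 12 * n by omega, mul_comm]
end
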